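/- Let A = I + (1/(g₋ᵀg₋)) p₋ gᵀ with g₋ ≠ 0 and gᵀp₋ = 0, let W be nonsingular and B = Aᵀ W A. Then for the solution p of B p = −g and any nonzero scalar δ: p = δ (−A⁻¹g) if and only if W g = (1/δ) g. (In particular A^{-T} g = g.) -/

import Mathlib

open Matrix

lemma vmv_mul_vmv {n : ℕ} (a b c d : Fin n → ℝ) :
    vecMulVec a b * vecMulVec c d = (b ⬝ᵥ c) • vecMulVec a d := by
  ext i j
  simp only [mul_apply, vecMulVec_apply, Matrix.smul_apply, smul_eq_mul, dotProduct,
    Finset.sum_mul, Finset.mul_sum]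
  exact Finset.sum_congr rfl fun k _ => by ring

lemma vmv_mulVec {n : ℕ} (a b v : Fin n → ℝ) :
    (vecMulVec a b).mulVec v = (b ⬝ᵥ v) • a := by
  ext i
  simp only [mulVec, vecMulVec_apply, dotProduct, Pi.smul_apply, smul_eq_mul,
    Finset.mul_sum, Finset.sum_mul]
  exact Finset.sum_congr rfl fun k _ => by ring

/-- with B = Aᵀ W A, p solving Bp = −g satisfies p = δ(−A⁻¹g) iff
    W g = (1/δ) g; in particular A^{-T} g = g. -/
theorem stmt3 {n : ℕ} (pm gm g : Fin n → ℝ) (hgm : gm ≠ 0) (hgp : g ⬝ᵥ pm = 0)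
    (A W B : Matrix (Fin n) (Fin n) ℝ)
    (hA : A = 1 + (1 / (gm ⬝ᵥ gm)) • Matrix.vecMulVec pm g)
    (hW : IsUnit W) (hB : B = Aᵀ * W * A)
    (p : Fin n → ℝ) (hp : B.mulVec p = -g)
    (δ : ℝ) (hδ : δ ≠ 0) :
    ((A⁻¹)ᵀ.mulVec g = g) ∧
    (p = δ • (-(A⁻¹.mulVec g)) ↔ W.mulVec g = δ⁻¹ • g) := by
  set c : ℝ := 1 / (gm ⬝ᵥ gm) with hc
  set M : Matrix (Fin n) (Fin n) ℝ := vecMulVec pm g with hM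
  have hM2 : M * M = 0 := by
    rw [hM, vmv_mul_vmv, hgp, zero_smul]
  have hAA' : A * (1 - c • M) = 1 := by
    rw [hA]
    simp only [mul_sub, add_mul, one_mul, mul_one, smul_mul_assoc, mul_smul_comm, hM2]
    simp [sub_add_eq_add_sub]
  have hA'A : (1 - c • M) * A = 1 := by
    rw [hA]
    simp only [sub_mul, mul_add, one_mul, mul_one, smul_mul_assoc, mul_smul_comm, hM2]
    simp [sub_add_eq_add_sub]
  have hAinv : A⁻¹ = 1 - c • M := Matrix.inv_eq_right_inv hAA'
  have hAdet : IsUnit A.det := by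
    have hd : A.det * (1 - c • M).det = 1 := by
      rw [← Matrix.det_mul, hAA', Matrix.det_one]
    exact IsUnit.of_mul_eq_one _ hd
  have hAunit : IsUnit A := (Matrix.isUnit_iff_isUnit_det A).mpr hAdet
  -- Aᵀ g = g and A⁻ᵀ g = g
  have hATg : Aᵀ.mulVec g = g := by
    rw [hA]
    simp only [transpose_add, transpose_one, transpose_smul, add_mulVec, one_mulVec,
      smul_mulVec]
    have : (vecMulVec pm g)ᵀ = vecMulVec g pm := by
      ext i j; simp [vecMulVec_apply, mul_comm]
    rw [this, vmv_mulVec]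
    rw [show pm ⬝ᵥ g = 0 from by rwa [dotProduct_comm]]
    simp
  have hAinvTg : (A⁻¹)ᵀ.mulVec g = g := by
    rw [hAinv]
    simp only [transpose_sub, transpose_one, transpose_smul, sub_mulVec, one_mulVec,
      smul_mulVec]
    have : (vecMulVec pm g)ᵀ = vecMulVec g pm := by
      ext i j; simp [vecMulVec_apply, mul_comm]
    rw [hM, this, vmv_mulVec]
    rw [show pm ⬝ᵥ g = 0 from by rwa [dotProduct_comm]]
    simp
  refine ⟨hAinvTg, ?_⟩
  -- From Bp = -g derive W (A p) = -g
  have hWdet : IsUnit W.det := (Matrix.isUnit_iff_isUnit_det W).mp hW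
  have hATinv : (Aᵀ)⁻¹.mulVec g = g := by
    rw [← Matrix.transpose_nonsing_inv]; exact hAinvTg
  have key : W.mulVec (A.mulVec p) = -g := by
    have h1 : (Aᵀ)⁻¹.mulVec (B.mulVec p) = (Aᵀ)⁻¹.mulVec (-g) := by rw [hp]
    rw [hB] at h1
    rw [Matrix.mulVec_mulVec] at h1
    rw [show (Aᵀ)⁻¹ * (Aᵀ * W * A) = W * A by
      rw [← mul_assoc, ← mul_assoc, Matrix.nonsing_inv_mul _ (by rw [Matrix.det_transpose]; exact hAdet), one_mul]] at h1
    rw [← Matrix.mulVec_mulVec, mulVec_neg, hATinv] at h1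
    exact h1
  -- p = -(A⁻¹ (W⁻¹ g))
  have hApeq : A.mulVec p = -(W⁻¹.mulVec g) := by
    have := congrArg (W⁻¹.mulVec) key
    rw [Matrix.mulVec_mulVec, Matrix.nonsing_inv_mul _ hWdet, one_mulVec, mulVec_neg] at this
    exact this
  constructor
  · intro hpe
    -- apply A to both sides
    have h2 : A.mulVec p = δ • (-g) := by
      rw [hpe]
      rw [mulVec_smul, mulVec_neg, Matrix.mulVec_mulVec, Matrix.mul_nonsing_inv _ hAdet,
        one_mulVec]
    rw [hApeq] at h2
    have h3 : W⁻¹.mulVec g = δ • g := by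
      have := congrArg Neg.neg h2
      simpa [smul_neg] using this
    have := congrArg (W.mulVec) h3
    rw [Matrix.mulVec_mulVec, Matrix.mul_nonsing_inv _ hWdet, one_mulVec, mulVec_smul] at this
    conv_rhs => rw [this]
    rw [smul_smul, inv_mul_cancel₀ hδ, one_smul]
  · intro hWg
    have h3 : W⁻¹.mulVec g = δ • g := by
      have h4 := congrArg (W⁻¹.mulVec) hWg
      rw [Matrix.mulVec_mulVec, Matrix.nonsing_inv_mul _ hWdet, one_mulVec,
        mulVec_smul] at h4
      conv_rhs => rw [h4]
      rw [smul_smul, mul_inv_cancel₀ hδ, one_smul]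
    have hpe : p = A⁻¹.mulVec (-(W⁻¹.mulVec g)) := by
      have := congrArg (A⁻¹.mulVec) hApeq
      rw [Matrix.mulVec_mulVec, Matrix.nonsing_inv_mul _ hAdet, one_mulVec] at this
      exact this
    rw [hpe, h3]
    simp [mulVec_smul, smul_neg, mulVec_neg]
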